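/- Let f : [0, c/r] → ℝ be given by f(w) = (1 − rw/c)^d with r > 0, c > 0, and let λ, m > 0 with d the larger root of r d^2 − (r+λ+m) d + λ = 0. Then f satisfies the nonlinear HJB equation λ f(w) = (rw − c) f'(w) − m f'(w)^2 / f''(w) for all w ∈ (0, c/r), with boundary conditions f(0) = 1 and f(c/r) = 0. -/

import Mathlib

set_option maxHeartbeats 1000000

lemma key11 (r c lam m d u A : ℝ) (hr : 0 < r) (hc : 0 < c) (hu : 0 < u) (hA : 0 < A)
    (hd1 : 1 < d) (hquad : r * d ^ 2 - (r + lam + m) * d + lam = 0) :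
    lam * A = -(c * u) * (-(r / c) * d * (A / u))
      - m * (-(r / c) * d * (A / u)) ^ 2 / (-(r / c) * d * (-(r / c) * (d - 1) * (A / (u * u)))) := by
  have hdm1 : d - 1 ≠ 0 := by intro h; nlinarith [sub_eq_zero.mp h]
  have hd0 : d ≠ 0 := by positivity
  field_simp
  ring_nf
  linear_combination (-1 : ℝ) * hquad

theorem stmt11 (r c lam m d : ℝ) (hr : 0 < r) (hc : 0 < c) (hlam : 0 < lam) (hm : 0 < m)
    (hd : d = (1 / (2 * r)) * ((r + lam + m) + Real.sqrt ((r + lam + m) ^ 2 - 4 * r * lam))) :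
    (∀ w ∈ Set.Ioo (0 : ℝ) (c / r),
      lam * ((1 - r * w / c) ^ d)
        = (r * w - c) * deriv (fun w' : ℝ => (1 - r * w' / c) ^ d) w
          - m * (deriv (fun w' : ℝ => (1 - r * w' / c) ^ d) w) ^ 2
            / deriv (deriv (fun w' : ℝ => (1 - r * w' / c) ^ d)) w) ∧
    ((1 : ℝ) - r * 0 / c) ^ d = 1 ∧ ((1 : ℝ) - r * (c / r) / c) ^ d = 0 := by
  set s := r + lam + m with hs
  set D := s ^ 2 - 4 * r * lam with hDdef
  have hD : 0 ≤ D := by nlinarith [sq_nonneg (r - lam), sq_nonneg (r + lam + m)]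
  have hsq : Real.sqrt D ^ 2 = D := Real.sq_sqrt hD
  have hsn : 0 ≤ Real.sqrt D := Real.sqrt_nonneg D
  have hd1 : 1 < d := by
    rw [hd]
    rw [div_mul_eq_mul_div, lt_div_iff₀ (by linarith : (0:ℝ) < 2 * r)]
    nlinarith [hsq, hsn, sq_nonneg (Real.sqrt D - (2 * r - s))]
  have hquad : r * d ^ 2 - s * d + lam = 0 := by
    rw [hd]
    field_simp
    nlinarith [hsq]
  have hd0 : d ≠ 0 := by linarith
  have hdm1 : d - 1 ≠ 0 := by intro h; linarith [sub_eq_zero.mp h]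
  refine ⟨?_, ?_, ?_⟩
  · intro w hw
    obtain ⟨hw0, hwcr⟩ := hw
    set u := 1 - r * w / c with hudef
    have hu_pos : 0 < u := by
      have : r * w < c := by
        have := (lt_div_iff₀ hr).mp hwcr
        linarith [this]
      rw [hudef]
      have : r * w / c < 1 := (div_lt_one hc).mpr this
      linarith
    have hu_ne : u ≠ 0 := ne_of_gt hu_pos
    -- derivative of base
    have hbase : ∀ x : ℝ, HasDerivAt (fun w' : ℝ => 1 - r * w' / c) (-(r / c)) x := by
      intro x
      have h1 : HasDerivAt (fun w' : ℝ => r * w' / c) (r / c) x := by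
        simpa using ((hasDerivAt_id x).const_mul r).div_const c
      exact h1.const_sub 1
    have hderiv1 : ∀ x : ℝ, (1 - r * x / c) ≠ 0 →
        HasDerivAt (fun w' : ℝ => (1 - r * w' / c) ^ d)
          (-(r / c) * d * (1 - r * x / c) ^ (d - 1)) x := by
      intro x hx
      exact (hbase x).rpow_const (Or.inl hx)
    have hderiv_eq : ∀ x : ℝ, (1 - r * x / c) ≠ 0 →
        deriv (fun w' : ℝ => (1 - r * w' / c) ^ d) x
          = -(r / c) * d * (1 - r * x / c) ^ (d - 1) := fun x hx => (hderiv1 x hx).deriv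
    -- eventually equal near w
    have hopen : IsOpen {x : ℝ | (1 - r * x / c) ≠ 0} := by
      have hcont : Continuous (fun x : ℝ => 1 - r * x / c) :=
        continuous_const.sub ((continuous_const.mul continuous_id).div_const c)
      exact isOpen_ne.preimage hcont
    have hmem : w ∈ {x : ℝ | (1 - r * x / c) ≠ 0} := hu_ne
    have hev : (fun x => deriv (fun w' : ℝ => (1 - r * w' / c) ^ d) x)
        =ᶠ[nhds w] (fun x => -(r / c) * d * (1 - r * x / c) ^ (d - 1)) := by
      filter_upwards [hopen.mem_nhds hmem] with x hx
      exact hderiv_eq x hx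
    have hderiv2 : HasDerivAt (fun x : ℝ => -(r / c) * d * (1 - r * x / c) ^ (d - 1))
        (-(r / c) * d * (-(r / c) * (d - 1) * u ^ (d - 1 - 1))) w := by
      have := ((hbase w).rpow_const (p := d - 1) (Or.inl hu_ne)).const_mul (-(r / c) * d)
      simpa [hudef] using this
    have hsecond : deriv (deriv (fun w' : ℝ => (1 - r * w' / c) ^ d)) w
        = -(r / c) * d * (-(r / c) * (d - 1) * u ^ (d - 1 - 1)) := by
      rw [hev.deriv_eq]
      exact hderiv2.deriv
    have hfirst : deriv (fun w' : ℝ => (1 - r * w' / c) ^ d) w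
        = -(r / c) * d * u ^ (d - 1) := hderiv_eq w hu_ne
    rw [hfirst, hsecond]
    have hA : 0 < u ^ d := Real.rpow_pos_of_pos hu_pos d
    have h1 : u ^ (d - 1) = u ^ d / u := by
      rw [Real.rpow_sub hu_pos, Real.rpow_one]
    have h2 : u ^ (d - 1 - 1) = u ^ d / (u * u) := by
      rw [Real.rpow_sub hu_pos, Real.rpow_sub hu_pos, Real.rpow_one, div_div]
    have hcu : r * w - c = -(c * u) := by
      rw [hudef]; field_simp; ring
    rw [h1, h2, hcu]
    exact key11 r c lam m d u (u ^ d) hr hc hu_pos hA hd1 hquad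
  · simp
  · have : r * (c / r) / c = 1 := by field_simp
    rw [this]
    simpa using Real.zero_rpow hd0
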